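/- Let R > 0, M ∈ ℝ, β > 0, and let D : [R,∞) → ℝ be continuous with D(r) = 1 − 2M/r + O(r^{−1−β}) as r → ∞ and D(r) > 0 on [R,∞). Fix C₀ ∈ ℝ and define ψ(r) = −C₀ ∫_r^∞ D(r')^{-1} r'^{-2} dr' for r ≥ R (the integral converges). Then r·ψ(r) = −C₀ − C₀ M r^{−1} + O(r^{−1−β'}) for some β' > 0, and consequently lim_{r→∞} r² · d/dr (r ψ(r)) = C₀ M. -/

import Mathlib

open MeasureTheory Filter Set

set_option maxHeartbeats 1000000

/-- Construction of a static spherically symmetric solution with nonvanishing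
Newman–Penrose constant: asymptotics of `ψ(r) = -C₀ ∫_r^∞ D(r')⁻¹ r'⁻² dr'`
(Lemma 8.2 of the paper). -/
theorem static_solution_asymptotics (R M β C₀ K : ℝ) (hR : 0 < R) (hβ : 0 < β)
    (D : ℝ → ℝ)
    (hDcont : ContinuousOn D (Set.Ici R))
    (hDpos : ∀ r ∈ Set.Ici R, 0 < D r)
    (hDasym : ∀ r ∈ Set.Ici R, |D r - (1 - 2 * M / r)| ≤ K * r ^ (-(1 + β))) :
    (∀ r ∈ Set.Ici R,
      IntegrableOn (fun r' : ℝ => (D r')⁻¹ * (r' ^ 2)⁻¹) (Set.Ioi r)) ∧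
    ∃ β' : ℝ, 0 < β' ∧ ∃ K' : ℝ,
      (∀ᶠ r in atTop,
        |r * (-C₀ * ∫ r' in Set.Ioi r, (D r')⁻¹ * (r' ^ 2)⁻¹) -
            (-C₀ - C₀ * M / r)| ≤ K' * r ^ (-(1 + β'))) ∧
      Tendsto
        (fun r : ℝ =>
          r ^ 2 * deriv (fun s : ℝ =>
            s * (-C₀ * ∫ r' in Set.Ioi s, (D r')⁻¹ * (r' ^ 2)⁻¹)) r)
        atTop (nhds (C₀ * M)) := by
  set g : ℝ → ℝ := fun r' : ℝ => (D r')⁻¹ * (r' ^ 2)⁻¹ with hg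
  -- basic facts
  have hK : 0 ≤ K := by
    have h := hDasym R (le_refl R)
    nlinarith [Real.rpow_pos_of_pos hR (-(1+β)),
      (abs_nonneg (D R - (1 - 2*M/R))).trans h]
  set β' : ℝ := min β 1 with hβ'def
  have hβ' : 0 < β' := lt_min hβ one_pos
  have hβ'le1 : β' ≤ 1 := min_le_right _ _
  have hβ'leβ : β' ≤ β := min_le_left _ _
  set r₁ : ℝ := max R (max 1 (2 * (2*|M| + K)) + 1) with hr₁def
  have hr₁R : R ≤ r₁ := le_max_left _ _
  have hr₁1 : 1 ≤ r₁ := by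
    refine le_trans ?_ (le_max_right R _)
    have : (0:ℝ) ≤ 2 * (2*|M| + K) := by positivity
    nlinarith [le_max_left (1:ℝ) (2*(2*|M|+K)), le_max_right (1:ℝ) (2*(2*|M|+K))]
  have hr₁big : 2 * (2*|M| + K) ≤ r₁ :=
    le_trans ((le_max_right 1 _).trans (le_add_of_nonneg_right zero_le_one)) (le_max_right R _)
  have hr₁pos : 0 < r₁ := lt_of_lt_of_le one_pos hr₁1
  -- continuity of g on Ici R
  have hgcont : ContinuousOn g (Set.Ici R) := by
    apply ContinuousOn.mul
    · exact hDcont.inv₀ fun x hx => (hDpos x hx).ne'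
    · exact ((continuous_pow 2).continuousOn).inv₀
        fun x hx => pow_ne_zero 2 (lt_of_lt_of_le hR hx).ne'
  -- D ≥ 1/2 for r ≥ r₁
  have halfD : ∀ r : ℝ, r₁ ≤ r → (2:ℝ)⁻¹ ≤ D r := by
    intro r hr
    have hr1 : (1:ℝ) ≤ r := hr₁1.trans hr
    have hr0 : (0:ℝ) < r := lt_of_lt_of_le one_pos hr1
    have hrc : r ∈ Set.Ici R := le_trans hr₁R hr
    have hb : |D r - (1 - 2*M/r)| ≤ K * r⁻¹ := by
      refine (hDasym r hrc).trans ?_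
      rw [← Real.rpow_neg_one r]
      exact mul_le_mul_of_nonneg_left
        (Real.rpow_le_rpow_of_exponent_le hr1 (by linarith)) hK
    have h1 : 1 - 2*M/r - K * r⁻¹ ≤ D r := by
      have := (abs_le.mp hb).1; linarith
    have h2 : 2*M/r ≤ 2*|M| * r⁻¹ := by
      rw [div_eq_mul_inv]
      exact mul_le_mul_of_nonneg_right (by nlinarith [le_abs_self M]) (by positivity)
    have h3 : (2*|M| + K) * r⁻¹ ≤ 2⁻¹ := by
      have hinv : 0 < r⁻¹ := by positivity
      have hc : r * r⁻¹ = 1 := mul_inv_cancel₀ hr0.ne'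
      nlinarith [hr₁big.trans hr]
    nlinarith [h1, h2, h3]
  -- key pointwise estimate on D⁻¹
  set C₂ : ℝ := 2*K + 4*|M| * (K + 2*|M|) + 1 with hC₂def
  have hC₂nonneg : 0 ≤ C₂ := by positivity
  have hB : ∀ r : ℝ, r₁ ≤ r → |(D r)⁻¹ - (1 + 2*M/r)| ≤ C₂ * r ^ (-(1+β')) := by
    intro r hr
    have hr1 : (1:ℝ) ≤ r := hr₁1.trans hr
    have hr0 : (0:ℝ) < r := lt_of_lt_of_le one_pos hr1
    have hrc : r ∈ Set.Ici R := le_trans hr₁R hr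
    have hD2 : (2:ℝ)⁻¹ ≤ D r := halfD r hr
    have hDne : D r ≠ 0 := by positivity
    have hrne : r ≠ 0 := hr0.ne'
    have e : (D r)⁻¹ - (1 + 2*M/r) =
        ((1 - 2*M/r) - D r - (2*M/r) * (D r - 1)) / D r := by
      field_simp
      ring
    -- basic rpow facts
    have hrp : 0 < r ^ (-(1+β')) := Real.rpow_pos_of_pos hr0 _
    have hb1 : |D r - (1 - 2*M/r)| ≤ K * r ^ (-(1+β')) := by
      refine (hDasym r hrc).trans ?_
      exact mul_le_mul_of_nonneg_left
        (Real.rpow_le_rpow_of_exponent_le hr1 (by linarith)) hK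
    have hbinv : r⁻¹ = r ^ (-1 : ℝ) := (Real.rpow_neg_one r).symm
    have hmono : r ^ (-(1+β')) ≤ r ^ (-1:ℝ) :=
      Real.rpow_le_rpow_of_exponent_le hr1 (by linarith)
    have hD1 : |D r - 1| ≤ (K + 2*|M|) * r⁻¹ := by
      have : |D r - 1| ≤ |D r - (1 - 2*M/r)| + |2*M/r| := by
        have : D r - 1 = (D r - (1 - 2*M/r)) + (-(2*M/r)) := by ring
        rw [this]
        exact (abs_add_le _ _).trans (by rw [abs_neg])
      refine this.trans ?_
      have h2 : |2*M/r| ≤ 2*|M| * r⁻¹ := by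
        rw [abs_div, div_eq_mul_inv, abs_of_pos hr0, abs_mul, abs_two]
      have h1 : |D r - (1 - 2*M/r)| ≤ K * r⁻¹ := by
        refine hb1.trans ?_
        rw [hbinv]
        exact mul_le_mul_of_nonneg_left hmono hK
      linarith [h1, h2]
    -- bound on the cross term
    have hcross : |(2*M/r) * (D r - 1)| ≤ 2*|M| * (K + 2*|M|) * r ^ (-(1+β')) := by
      rw [abs_mul]
      have h2 : |2*M/r| ≤ 2*|M| * r⁻¹ := by
        rw [abs_div, div_eq_mul_inv, abs_of_pos hr0, abs_mul, abs_two]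
      have hKM : 0 ≤ K + 2*|M| := by positivity
      calc |2*M/r| * |D r - 1| ≤ (2*|M| * r⁻¹) * ((K + 2*|M|) * r⁻¹) := by
            apply mul_le_mul h2 hD1 (abs_nonneg _) (by positivity)
        _ = 2*|M| * (K + 2*|M|) * (r⁻¹ * r⁻¹) := by ring
        _ ≤ 2*|M| * (K + 2*|M|) * r ^ (-(1+β')) := by
            apply mul_le_mul_of_nonneg_left _ (by positivity)
            rw [hbinv, ← Real.rpow_add hr0]
            exact Real.rpow_le_rpow_of_exponent_le hr1 (by linarith)
    -- numerator bound
    have hnum : |(1 - 2*M/r) - D r - (2*M/r) * (D r - 1)| ≤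
        (K + 2*|M| * (K + 2*|M|)) * r ^ (-(1+β')) := by
      have : |(1 - 2*M/r) - D r - (2*M/r) * (D r - 1)| ≤
          |(1 - 2*M/r) - D r| + |(2*M/r) * (D r - 1)| := by
        have e2 : (1 - 2*M/r) - D r - (2*M/r) * (D r - 1) =
            ((1 - 2*M/r) - D r) + (-((2*M/r) * (D r - 1))) := by ring
        rw [e2]
        exact (abs_add_le _ _).trans (by rw [abs_neg])
      refine this.trans ?_
      rw [abs_sub_comm] at hb1
      nlinarith [hb1, hcross]
    rw [e, abs_div, abs_of_pos (lt_of_lt_of_le (by norm_num) hD2)]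
    rw [div_le_iff₀ (lt_of_lt_of_le (by norm_num) hD2)]
    calc |(1 - 2*M/r) - D r - (2*M/r) * (D r - 1)| ≤
        (K + 2*|M| * (K + 2*|M|)) * r ^ (-(1+β')) := hnum
      _ ≤ (C₂ * r ^ (-(1+β'))) * 2⁻¹ := by
          rw [hC₂def]; linarith [hrp]
      _ ≤ (C₂ * r ^ (-(1+β'))) * D r := by
          apply mul_le_mul_of_nonneg_left hD2 (by positivity)
  -- Part 1 : integrability
  have hInt : ∀ r ∈ Set.Ici R, IntegrableOn g (Set.Ioi r) := by
    intro r hr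
    have hr0 : 0 < r := lt_of_lt_of_le hR hr
    -- positive lower bound for D on [r, ∞)
    obtain ⟨c, hc, hcmin⟩ : ∃ c : ℝ, 0 < c ∧ ∀ x : ℝ, r ≤ x → c ≤ D x := by
      obtain ⟨x₀, hx₀, hx₀min⟩ := isCompact_Icc.exists_isMinOn
        (Set.nonempty_Icc.mpr (le_max_left r r₁))
        (hDcont.mono (fun x hx => le_trans hr hx.1))
      refine ⟨min (D x₀) 2⁻¹, lt_min (hDpos x₀ (le_trans hr hx₀.1)) (by norm_num), ?_⟩
      intro x hx
      rcases le_or_gt x (max r r₁) with h | h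
      · exact le_trans (min_le_left _ _) (hx₀min ⟨hx, h⟩)
      · exact le_trans (min_le_right _ _) (halfD x ((le_max_right r r₁).trans h.le))
    refine Integrable.mono'
      ((integrableOn_Ioi_rpow_of_lt (by norm_num : (-2:ℝ) < -1) hr0).const_mul c⁻¹)
      (hgcont.mono (fun x hx => le_trans hr (le_of_lt hx))
        |>.aestronglyMeasurable measurableSet_Ioi) ?_
    filter_upwards [ae_restrict_mem measurableSet_Ioi] with x hx
    have hxr : r < x := hx
    have hx0 : 0 < x := hr0.trans hxr
    have hDx : 0 < D x := hDpos x (le_trans hr hxr.le)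
    have hDxc : c ≤ D x := hcmin x hxr.le
    have hxp : x ^ (-2:ℝ) = (x^2)⁻¹ := by
      rw [show (-2:ℝ) = -((2:ℕ):ℝ) by norm_num, Real.rpow_neg hx0.le, Real.rpow_natCast]
    rw [Real.norm_eq_abs, hg]
    simp only
    rw [abs_of_pos (by positivity), hxp]
    exact mul_le_mul_of_nonneg_right (by
      apply inv_anti₀ hc hDxc) (by positivity)
  -- key integral estimate
  have hC : ∀ r : ℝ, r₁ ≤ r →
      |(∫ r' in Set.Ioi r, g r') - (r⁻¹ + M * (r⁻¹ * r⁻¹))| ≤ C₂ * r ^ (-(2+β')) := by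
    intro r hr
    have hr1 : (1:ℝ) ≤ r := hr₁1.trans hr
    have hr0 : (0:ℝ) < r := lt_of_lt_of_le one_pos hr1
    have hrc : r ∈ Set.Ici R := le_trans hr₁R hr
    have hi2 : IntegrableOn (fun t : ℝ => t ^ (-2:ℝ)) (Set.Ioi r) :=
      integrableOn_Ioi_rpow_of_lt (by norm_num) hr0
    have hi3 : IntegrableOn (fun t : ℝ => t ^ (-3:ℝ)) (Set.Ioi r) :=
      integrableOn_Ioi_rpow_of_lt (by norm_num) hr0
    have hbase_int : IntegrableOn (fun t : ℝ => t ^ (-2:ℝ) + 2*M*t ^ (-3:ℝ)) (Set.Ioi r) :=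
      hi2.add (hi3.const_mul (2*M))
    have I2 : ∫ t in Set.Ioi r, t ^ (-2:ℝ) = r⁻¹ := by
      rw [integral_Ioi_rpow_of_lt (by norm_num) hr0,
        show (-2:ℝ)+1 = -1 by norm_num, Real.rpow_neg_one]
      ring
    have I3 : ∫ t in Set.Ioi r, t ^ (-3:ℝ) = (r⁻¹ * r⁻¹)/2 := by
      rw [integral_Ioi_rpow_of_lt (by norm_num) hr0,
        show (-3:ℝ)+1 = (-1)+(-1) by norm_num, Real.rpow_add hr0, Real.rpow_neg_one]
      ring
    have hbase_val : ∫ t in Set.Ioi r, (t ^ (-2:ℝ) + 2*M*t ^ (-3:ℝ))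
        = r⁻¹ + M * (r⁻¹ * r⁻¹) := by
      rw [integral_add hi2 (hi3.const_mul (2*M)), integral_const_mul, I2, I3]
      ring
    have hsplit : (∫ r' in Set.Ioi r, g r') - (r⁻¹ + M * (r⁻¹ * r⁻¹))
        = ∫ t in Set.Ioi r, (g t - (t ^ (-2:ℝ) + 2*M*t ^ (-3:ℝ))) := by
      rw [integral_sub (hInt r hrc) hbase_int, hbase_val]
    rw [hsplit, ← Real.norm_eq_abs]
    have hbnd : ∫ t in Set.Ioi r, C₂ * t ^ (-(3+β')) ≤ C₂ * r ^ (-(2+β')) := by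
      rw [integral_const_mul, integral_Ioi_rpow_of_lt (by linarith) hr0,
        show -(3+β')+1 = -(2+β') by ring, neg_div_neg_eq]
      have hpos : 0 ≤ r ^ (-(2+β')) := (Real.rpow_pos_of_pos hr0 _).le
      have : r ^ (-(2+β')) / (2+β') ≤ r ^ (-(2+β')) :=
        div_le_self hpos (by linarith)
      exact mul_le_mul_of_nonneg_left this hC₂nonneg
    refine le_trans (norm_integral_le_of_norm_le
      ((integrableOn_Ioi_rpow_of_lt (show -(3+β') < -1 by linarith) hr0).const_mul C₂) ?_) hbnd
    filter_upwards [ae_restrict_mem measurableSet_Ioi] with t ht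
    have htr : r < t := ht
    have ht1 : (1:ℝ) ≤ t := hr1.trans htr.le
    have ht0 : (0:ℝ) < t := lt_of_lt_of_le one_pos ht1
    have htc : t ∈ Set.Ici R := le_trans hr₁R (hr.trans htr.le)
    have hDt : 0 < D t := hDpos t htc
    have ht2 : t ^ (-2:ℝ) = (t^2)⁻¹ := by
      rw [show (-2:ℝ) = -((2:ℕ):ℝ) by norm_num, Real.rpow_neg ht0.le, Real.rpow_natCast]
    have ht3 : t ^ (-3:ℝ) = (t^2)⁻¹ * t⁻¹ := by
      rw [show (-3:ℝ) = (-2)+(-1) by norm_num, Real.rpow_add ht0, ht2, Real.rpow_neg_one]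
    have hfact : g t - (t ^ (-2:ℝ) + 2*M*t ^ (-3:ℝ))
        = ((D t)⁻¹ - (1 + 2*M/t)) * (t^2)⁻¹ := by
      rw [ht2, ht3, hg, div_eq_mul_inv]
      ring
    rw [Real.norm_eq_abs, hfact, abs_mul, abs_of_pos (by positivity : (0:ℝ) < (t^2)⁻¹)]
    calc |(D t)⁻¹ - (1 + 2*M/t)| * (t^2)⁻¹
        ≤ (C₂ * t ^ (-(1+β'))) * (t^2)⁻¹ := by
          exact mul_le_mul_of_nonneg_right (hB t (hr.trans htr.le)) (by positivity)
      _ = C₂ * t ^ (-(3+β')) := by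
          rw [← ht2, mul_assoc, ← Real.rpow_add ht0,
            show (-(1+β')) + (-2:ℝ) = -(3+β') by ring]
  -- formula for the derivative for r > r₁
  have hderiv : ∀ r : ℝ, r₁ < r →
      deriv (fun s : ℝ => s * (-C₀ * ∫ r' in Set.Ioi s, g r')) r
        = -C₀ * (∫ r' in Set.Ioi r, g r') + C₀ * (r * g r) := by
    intro r hrr
    have hrR' : R < r := lt_of_le_of_lt hr₁R hrr
    have hmem : Set.Ici R ∈ nhds r :=
      mem_of_superset (Ioi_mem_nhds hrR') Set.Ioi_subset_Ici_self
    have hFTC : HasDerivAt (fun u : ℝ => ∫ t in r₁..u, g t) (g r) r := by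
      apply intervalIntegral.integral_hasDerivAt_right
      · apply ContinuousOn.intervalIntegrable
        apply hgcont.mono
        rw [Set.uIcc_of_le hrr.le]
        exact fun x hx => le_trans hr₁R hx.1
      · exact (hgcont.mono (fun x (hx : x ∈ Set.Ioi R) => Set.Ioi_subset_Ici_self hx)).stronglyMeasurableAtFilter
          isOpen_Ioi r hrR'
      · exact hgcont.continuousAt hmem
    have heq : (fun s : ℝ => ∫ r' in Set.Ioi s, g r') =ᶠ[nhds r]
        (fun s : ℝ => (∫ t in Set.Ioi r₁, g t) - ∫ t in r₁..s, g t) := by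
      filter_upwards [eventually_gt_nhds hrr] with s hs
      have hs0 : s ∈ Set.Ici R := le_trans hr₁R hs.le
      rw [intervalIntegral.integral_of_le hs.le]
      have hsplit : ∫ t in Set.Ioi r₁, g t
          = (∫ t in Set.Ioc r₁ s, g t) + ∫ t in Set.Ioi s, g t := by
        rw [← setIntegral_union (Set.Ioc_disjoint_Ioi le_rfl) measurableSet_Ioi
          ((hInt r₁ hr₁R).mono_set Set.Ioc_subset_Ioi_self) (hInt s hs0),
          Set.Ioc_union_Ioi_eq_Ioi hs.le]
      linarith [hsplit]
    have hf' : HasDerivAt (fun s : ℝ => ∫ r' in Set.Ioi s, g r') (-(g r)) r := by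
      refine HasDerivAt.congr_of_eventuallyEq ?_ heq
      have := (hasDerivAt_const r (∫ t in Set.Ioi r₁, g t)).sub hFTC
      rw [zero_sub] at this
      exact this
    have hφ : HasDerivAt (fun s : ℝ => s * (-C₀ * ∫ r' in Set.Ioi s, g r'))
        (1 * (-C₀ * ∫ r' in Set.Ioi r, g r') + r * (-C₀ * -(g r))) r :=
      (hasDerivAt_id r).mul (hf'.const_mul (-C₀))
    rw [hφ.deriv]
    ring
  refine ⟨hInt, β', hβ', |C₀| * C₂ + 1, ?_, ?_⟩
  · -- eventual bound
    filter_upwards [eventually_ge_atTop r₁] with r hr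
    have hr1 : (1:ℝ) ≤ r := hr₁1.trans hr
    have hr0 : (0:ℝ) < r := lt_of_lt_of_le one_pos hr1
    have key := hC r hr
    have e : r * (-C₀ * ∫ r' in Set.Ioi r, g r') - (-C₀ - C₀ * M / r)
        = -C₀ * r * ((∫ r' in Set.Ioi r, g r') - (r⁻¹ + M * (r⁻¹ * r⁻¹))) := by
      field_simp
      ring
    rw [e, abs_mul, show |-C₀ * r| = |C₀| * r by rw [abs_mul, abs_neg, abs_of_pos hr0]]
    have p1 : r * r ^ (-(2+β')) = r ^ (-(1+β')) := by
      have h := Real.rpow_add hr0 1 (-(2+β'))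
      rw [Real.rpow_one] at h
      rw [← h, show (1:ℝ) + -(2+β') = -(1+β') by ring]
    calc |C₀| * r * |(∫ r' in Set.Ioi r, g r') - (r⁻¹ + M * (r⁻¹ * r⁻¹))|
        ≤ |C₀| * r * (C₂ * r ^ (-(2+β'))) :=
          mul_le_mul_of_nonneg_left key (by positivity)
      _ = |C₀| * C₂ * (r * r ^ (-(2+β'))) := by ring
      _ = |C₀| * C₂ * r ^ (-(1+β')) := by rw [p1]
      _ ≤ (|C₀| * C₂ + 1) * r ^ (-(1+β')) := by
          have := (Real.rpow_pos_of_pos hr0 (-(1+β'))).le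
          nlinarith
  · -- the limit of r² (rψ)'
    rw [tendsto_iff_dist_tendsto_zero]
    apply squeeze_zero' (Eventually.of_forall fun _ => dist_nonneg)
      (g := fun r : ℝ => (2 * |C₀| * C₂) * r ^ (-β'))
    · filter_upwards [eventually_gt_atTop r₁] with r hrr
      have hr1 : (1:ℝ) ≤ r := hr₁1.trans hrr.le
      have hr0 : (0:ℝ) < r := lt_of_lt_of_le one_pos hr1
      have hrc : r ∈ Set.Ici R := le_trans hr₁R hrr.le
      have hD0 : 0 < D r := hDpos r hrc
      have key := hC r hrr.le
      have keyB := hB r hrr.le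
      rw [Real.dist_eq, hderiv r hrr]
      have p1 : r * r ^ (-(1+β')) = r ^ (-β') := by
        have h := Real.rpow_add hr0 1 (-(1+β'))
        rw [Real.rpow_one] at h
        rw [← h, show (1:ℝ) + -(1+β') = -β' by ring]
      have p2 : r^2 * r ^ (-(2+β')) = r ^ (-β') := by
        have h := Real.rpow_add hr0 2 (-(2+β'))
        rw [show r ^ (2:ℝ) = r ^ (2:ℕ) by
          rw [show (2:ℝ) = ((2:ℕ):ℝ) by norm_num, Real.rpow_natCast]] at h
        rw [← h, show (2:ℝ) + -(2+β') = -β' by ring]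
      have e1 : |r^2 * (∫ r' in Set.Ioi r, g r') - r - M| ≤ C₂ * r ^ (-β') := by
        have e : r^2 * (∫ r' in Set.Ioi r, g r') - r - M
            = r^2 * ((∫ r' in Set.Ioi r, g r') - (r⁻¹ + M * (r⁻¹ * r⁻¹))) := by
          field_simp
          ring
        rw [e, abs_mul, abs_of_pos (by positivity : (0:ℝ) < r^2)]
        calc r^2 * |(∫ r' in Set.Ioi r, g r') - (r⁻¹ + M * (r⁻¹ * r⁻¹))|
            ≤ r^2 * (C₂ * r ^ (-(2+β'))) :=
              mul_le_mul_of_nonneg_left key (by positivity)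
          _ = C₂ * (r^2 * r ^ (-(2+β'))) := by ring
          _ = C₂ * r ^ (-β') := by rw [p2]
      have e2 : |r^2 * (r * g r) - r - 2*M| ≤ C₂ * r ^ (-β') := by
        have e : r^2 * (r * g r) - r - 2*M = r * ((D r)⁻¹ - (1 + 2*M/r)) := by
          rw [hg]
          field_simp
          ring
        rw [e, abs_mul, abs_of_pos hr0]
        calc r * |(D r)⁻¹ - (1 + 2*M/r)|
            ≤ r * (C₂ * r ^ (-(1+β'))) := mul_le_mul_of_nonneg_left keyB hr0.le
          _ = C₂ * (r * r ^ (-(1+β'))) := by ring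
          _ = C₂ * r ^ (-β') := by rw [p1]
      have edec : r^2 * (-C₀ * (∫ r' in Set.Ioi r, g r') + C₀ * (r * g r)) - C₀*M
          = -C₀ * (r^2 * (∫ r' in Set.Ioi r, g r') - r - M)
            + C₀ * (r^2 * (r * g r) - r - 2*M) := by ring
      rw [edec]
      calc |(-C₀) * (r^2 * (∫ r' in Set.Ioi r, g r') - r - M)
            + C₀ * (r^2 * (r * g r) - r - 2*M)|
          ≤ |C₀| * |r^2 * (∫ r' in Set.Ioi r, g r') - r - M|
            + |C₀| * |r^2 * (r * g r) - r - 2*M| := by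
            refine (abs_add_le _ _).trans ?_
            rw [abs_mul, abs_mul, abs_neg]
        _ ≤ |C₀| * (C₂ * r ^ (-β')) + |C₀| * (C₂ * r ^ (-β')) :=
            add_le_add (mul_le_mul_of_nonneg_left e1 (abs_nonneg _))
              (mul_le_mul_of_nonneg_left e2 (abs_nonneg _))
        _ = (2 * |C₀| * C₂) * r ^ (-β') := by ring
    · have := (tendsto_rpow_neg_atTop hβ').const_mul (2 * |C₀| * C₂)
      simpa using this
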